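/- Let ℍ denote the real quaternions, f ∈ ℍ[x] a nonzero polynomial of degree n with leading coefficient c. Then f decomposes into linear factors f = c·(x − λₙ)·(x − λ_{n−1})⋯(x − λ₁) for some λ₁, …, λₙ ∈ ℍ if and only if there exist γ₁, …, γₙ ∈ ℍ such that the companion polynomial decomposes as C_f = f̄·f = Norm(c)·∏_{k=1}^{n}(x² − Tr(γₖ)x + Norm(γₖ)) in ℍ[x]; moreover, in that case the λₖ can be chosen so that each λₖ has the same trace and norm as γₖ (i.e., λₖ lies in the conjugacy class of γₖ). -/

import Mathlib

open Polynomial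

/-- The conjugate polynomial: apply quaternion conjugation (`star`)
coefficient-wise. -/
noncomputable def polyConj (f : (Quaternion ℝ)[X]) : (Quaternion ℝ)[X] :=
  f.sum fun i a => C (star a) * X ^ i

/-- The ordered product `c·(x - λₙ)·(x - λ_{n-1})⋯(x - λ₁)` (indices `1,…,n`,
taken in descending order, all products associated to the left as written). -/
noncomputable def linearFactorization (c : Quaternion ℝ) (n : ℕ)
    (lam : ℕ → Quaternion ℝ) : (Quaternion ℝ)[X] :=
  C c * ((List.range n).reverse.map fun k => X - C (lam (k + 1))).prod

/-- The product `Norm(c) · ∏_{k=1}^{n} (x² - Tr(γₖ)·x + Norm(γₖ))`; each factor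
has central (real) coefficients, so the product is order-independent. -/
noncomputable def quadraticFactorization (c : Quaternion ℝ) (n : ℕ)
    (γ : ℕ → Quaternion ℝ) : (Quaternion ℝ)[X] :=
  C (star c * c) *
    ((List.range n).map fun k =>
      X ^ 2 - C (γ (k + 1) + star (γ (k + 1))) * X +
        C (star (γ (k + 1)) * γ (k + 1))).prod

namespace QFactAux

local notation "ℍ" => Quaternion ℝ

lemma coeff_polyConj (f : ℍ[X]) (k : ℕ) : (polyConj f).coeff k = star (f.coeff k) := by
  rw [polyConj, coeff_sum, Polynomial.sum_def]
  simp only [coeff_C_mul, coeff_X_pow, mul_ite, mul_one, mul_zero]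
  rw [Finset.sum_ite_eq]
  by_cases h : k ∈ f.support
  · simp [h]
  · simp [h, Polynomial.notMem_support_iff.mp h]

lemma polyConj_C (a : ℍ) : polyConj (C a) = C (star a) := by
  refine Polynomial.ext fun k => ?_
  simp [coeff_polyConj, coeff_C, apply_ite star]

lemma polyConj_X : polyConj (X : ℍ[X]) = X := by
  refine Polynomial.ext fun k => ?_
  simp [coeff_polyConj, coeff_X, apply_ite star]

lemma polyConj_add (p q : ℍ[X]) : polyConj (p + q) = polyConj p + polyConj q := by
  refine Polynomial.ext fun k => ?_
  simp [coeff_polyConj]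

lemma polyConj_sub (p q : ℍ[X]) : polyConj (p - q) = polyConj p - polyConj q := by
  refine Polynomial.ext fun k => ?_
  simp [coeff_polyConj]

lemma polyConj_mul (p q : ℍ[X]) : polyConj (p * q) = polyConj q * polyConj p := by
  refine Polynomial.ext fun k => ?_
  rw [coeff_polyConj, coeff_mul, coeff_mul, star_sum]
  conv_rhs => rw [← Finset.HasAntidiagonal.map_swap_antidiagonal]
  rw [Finset.sum_map]
  refine Finset.sum_congr rfl fun x _ => ?_
  simp [coeff_polyConj, star_mul]

lemma polyConj_polyConj (p : ℍ[X]) : polyConj (polyConj p) = p := by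
  refine Polynomial.ext fun k => ?_
  simp [coeff_polyConj]

lemma polyConj_ne_zero {p : ℍ[X]} (hp : p ≠ 0) : polyConj p ≠ 0 := by
  intro h
  apply hp
  have := congrArg polyConj h
  rw [polyConj_polyConj] at this
  simpa [polyConj] using this

/-- A polynomial fixed by `polyConj` has real (hence central) coefficients and
commutes with everything. -/
lemma central_of_polyConj_eq {p : ℍ[X]} (hp : polyConj p = p) (q : ℍ[X]) : p * q = q * p := by
  have hc : ∀ n (b : ℍ), p.coeff n * b = b * p.coeff n := by
    intro n b
    have h1 : star (p.coeff n) = p.coeff n := by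
      rw [← coeff_polyConj, hp]
    rw [Quaternion.star_eq_self] at h1
    rw [h1]
    exact Quaternion.coe_commute _ b
  refine Polynomial.ext fun k => ?_
  rw [coeff_mul, coeff_mul]
  conv_rhs => rw [← Finset.HasAntidiagonal.map_swap_antidiagonal]
  rw [Finset.sum_map]
  refine Finset.sum_congr rfl fun x _ => ?_
  simpa using hc x.1 (q.coeff x.2)

lemma expand_quad (μ : ℍ) : (X - C (star μ)) * (X - C μ) =
    X ^ 2 - C (μ + star μ) * X + C (star μ * μ) := by
  simp only [C_add, C_mul, sub_mul, mul_sub, add_mul, sq]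
  rw [Polynomial.X_mul (p := C μ)]
  abel

lemma polyConj_quad (γ : ℍ) :
    polyConj (X ^ 2 - C (γ + star γ) * X + C (star γ * γ)) =
      X ^ 2 - C (γ + star γ) * X + C (star γ * γ) := by
  have : (X ^ 2 - C (γ + star γ) * X + C (star γ * γ) : ℍ[X]) =
      (X - C (star γ)) * (X - C γ) := (expand_quad γ).symm
  rw [this, polyConj_mul, polyConj_sub, polyConj_sub, polyConj_X, polyConj_C, polyConj_C,
    star_star, expand_quad]

lemma degree_lin_lt (t m : ℍ) : (C m - C t * X : ℍ[X]).degree < 2 := by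
  refine lt_of_le_of_lt (Polynomial.degree_sub_le _ _) ?_
  refine max_lt (lt_of_le_of_lt Polynomial.degree_C_le (by norm_num)) ?_
  refine lt_of_le_of_lt (Polynomial.degree_mul_le _ _) ?_
  calc (C t).degree + (X : ℍ[X]).degree ≤ 0 + 1 :=
        add_le_add Polynomial.degree_C_le Polynomial.degree_X_le
    _ < 2 := by norm_num

lemma monic_quad (t m : ℍ) : (X ^ 2 - C t * X + C m : ℍ[X]).Monic := by
  have h : (X ^ 2 - C t * X + C m : ℍ[X]) = X ^ 2 + (C m - C t * X) := by abel
  rw [h]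
  exact Polynomial.monic_X_pow_add (by exact_mod_cast degree_lin_lt t m)

lemma degree_quad (t m : ℍ) : (X ^ 2 - C t * X + C m : ℍ[X]).degree = 2 := by
  have h : (X ^ 2 - C t * X + C m : ℍ[X]) = X ^ 2 + (C m - C t * X) := by abel
  rw [h]
  have h2 : (C m - C t * X : ℍ[X]).degree < (X ^ 2 : ℍ[X]).degree := by
    rw [Polynomial.degree_X_pow]
    exact_mod_cast degree_lin_lt t m
  rw [Polynomial.degree_add_eq_left_of_degree_lt h2, Polynomial.degree_X_pow]
  norm_cast

lemma coeff_quad_one (t m : ℍ) : (X ^ 2 - C t * X + C m : ℍ[X]).coeff 1 = -t := by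
  simp [coeff_X_pow]

lemma coeff_quad_zero (t m : ℍ) : (X ^ 2 - C t * X + C m : ℍ[X]).coeff 0 = m := by
  simp [coeff_X_pow]

lemma coeff_quad_two (t m : ℍ) : (X ^ 2 - C t * X + C m : ℍ[X]).coeff 2 = 1 := by
  simp [coeff_X_pow]

/-- Core peeling lemma: if `q_γ` right-divides the companion polynomial of `f`,
then `f` has a right linear factor `X - C λ` with `λ` in the conjugacy class
of `γ`. -/
lemma peel (f : ℍ[X]) (hf : f ≠ 0) (γ : ℍ) (G : ℍ[X])
    (hdvd : polyConj f * f = G * (X ^ 2 - C (γ + star γ) * X + C (star γ * γ))) :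
    ∃ (g : ℍ[X]) (lam : ℍ), f = g * (X - C lam) ∧
      lam + star lam = γ + star γ ∧ star lam * lam = star γ * γ := by
  set q : ℍ[X] := X ^ 2 - C (γ + star γ) * X + C (star γ * γ) with hqdef
  have hqm : q.Monic := monic_quad _ _
  have hqc : polyConj q = q := polyConj_quad γ
  have hqcent : ∀ p : ℍ[X], q * p = p * q := central_of_polyConj_eq hqc
  have hsplit : q = (X - C (star γ)) * (X - C γ) := (expand_quad γ).symm
  set r : ℍ[X] := f %ₘ q with hrdef
  set h : ℍ[X] := f /ₘ q with hhdef
  have hfe : f = q * h + r := (modByMonic_add_div f q).symm.trans (add_comm _ _)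
  have hdr : r.degree < 2 := by
    have := degree_modByMonic_lt f hqm
    rwa [degree_quad] at this
  by_cases hr0 : r = 0
  · refine ⟨h * (X - C (star γ)), γ, ?_, rfl, rfl⟩
    rw [hfe, hr0, add_zero, hqcent h, hsplit, ← mul_assoc]
  · -- the remainder is nonzero
    set a : ℍ := r.coeff 1 with hadef
    set b : ℍ := r.coeff 0 with hbdef
    have hrE : r = C a * X + C b := eq_X_add_C_of_degree_le_one (Order.le_of_lt_succ hdr)
    have h1 : polyConj f = polyConj h * q + polyConj r := by
      rw [hfe, polyConj_add, polyConj_mul, hqc]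
    have e1 : polyConj f * f =
        q * (polyConj h * q * h + polyConj h * r + polyConj r * h) + polyConj r * r := by
      have hAq : polyConj h * q = q * polyConj h := (hqcent _).symm
      have hBq : polyConj r * q = q * polyConj r := (hqcent _).symm
      rw [h1]
      conv_lhs => rw [hfe]
      calc (polyConj h * q + polyConj r) * (q * h + r)
          = (polyConj h * q) * (q * h) + (polyConj h * q) * r +
              ((polyConj r * q) * h + polyConj r * r) := by noncomm_ring
        _ = (q * polyConj h) * (q * h) + (q * polyConj h) * r +
              ((q * polyConj r) * h + polyConj r * r) := by rw [hAq, hBq]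
        _ = q * (polyConj h * q * h + polyConj h * r + polyConj r * h) + polyConj r * r := by
              noncomm_ring
    have key : polyConj r * r =
        q * (G - (polyConj h * q * h + polyConj h * r + polyConj r * h)) := by
      have h2 : q * (polyConj h * q * h + polyConj h * r + polyConj r * h) + polyConj r * r
          = q * G := by rw [← e1, hdvd, hqcent G]
      rw [mul_sub]
      exact eq_sub_of_add_eq' h2
    set w : ℍ[X] := G - (polyConj h * q * h + polyConj h * r + polyConj r * h) with hwdef
    have hrr0 : polyConj r * r ≠ 0 := mul_ne_zero (polyConj_ne_zero hr0) hr0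
    have hw0 : w ≠ 0 := by
      intro h0
      rw [h0, mul_zero] at key
      exact hrr0 key
    have ha : a ≠ 0 := by
      intro ha0
      have hb0 : b ≠ 0 := by
        intro hb0
        exact hr0 (by rw [hrE, ha0, hb0]; simp)
      have hrC : r = C b := by rw [hrE, ha0]; simp
      have hdeg1 : (polyConj r * r).degree = 0 := by
        rw [hrC, polyConj_C, ← C_mul]
        exact Polynomial.degree_C (mul_ne_zero (star_ne_zero.mpr hb0) hb0)
      rw [key, degree_mul, degree_quad, Polynomial.degree_eq_natDegree hw0] at hdeg1
      exact absurd hdeg1 (by exact_mod_cast (by omega : 2 + w.natDegree ≠ 0))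
    set lam : ℍ := -(a⁻¹ * b) with hlamdef
    have halam : a * lam = -b := by
      rw [hlamdef, mul_neg, ← mul_assoc, mul_inv_cancel₀ ha, one_mul]
    have hrF : r = C a * (X - C lam) := by
      rw [mul_sub, ← C_mul, halam, Polynomial.C_neg, sub_neg_eq_add, hrE]
    have hcent_aa : ∀ p : ℍ[X], C (star a * a) * p = p * C (star a * a) := by
      apply central_of_polyConj_eq
      rw [polyConj_C, star_mul, star_star]
    have h2' : polyConj r * r =
        C (star a * a) * (X ^ 2 - C (lam + star lam) * X + C (star lam * lam)) := by
      rw [← expand_quad]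
      rw [hrF, polyConj_mul, polyConj_sub, polyConj_X, polyConj_C, polyConj_C]
      calc (X - C (star lam)) * C (star a) * (C a * (X - C lam))
          = (X - C (star lam)) * (C (star a) * C a) * (X - C lam) := by noncomm_ring
        _ = (X - C (star lam)) * C (star a * a) * (X - C lam) := by rw [C_mul]
        _ = C (star a * a) * (X - C (star lam)) * (X - C lam) := by
              rw [← hcent_aa (X - C (star lam))]
        _ = C (star a * a) * ((X - C (star lam)) * (X - C lam)) := by rw [mul_assoc]
    have haa0 : star a * a ≠ 0 := mul_ne_zero (star_ne_zero.mpr ha) ha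
    have hCaa0 : (C (star a * a) : ℍ[X]) ≠ 0 := by
      simpa using haa0
    -- degree of w is 0
    have hdw : w.degree ≤ 0 := by
      have hdeg2 : (q * w).degree = 2 := by
        rw [← key, h2', degree_mul, Polynomial.degree_C haa0, degree_quad, zero_add]
      rw [degree_mul, degree_quad, Polynomial.degree_eq_natDegree hw0] at hdeg2
      have h9 : 2 + w.natDegree = 2 := by exact_mod_cast hdeg2
      rw [Polynomial.degree_eq_natDegree hw0]
      exact_mod_cast Nat.le_of_eq (by omega)
    have hwC : w = C (w.coeff 0) := eq_C_of_degree_le_zero hdw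
    -- identify w.coeff 0 with star a * a by comparing the coefficient of X^2
    have hco : star a * a = w.coeff 0 := by
      have h4 := congrArg (fun p => p.coeff 2) (h2'.symm.trans key)
      rw [coeff_C_mul, coeff_quad_two, mul_one] at h4
      conv_rhs at h4 => rw [hwC]
      rw [coeff_mul_C, hqdef, coeff_quad_two, one_mul] at h4
      exact h4
    have hqq : (X ^ 2 - C (lam + star lam) * X + C (star lam * lam) : ℍ[X]) = q := by
      apply mul_left_cancel₀ hCaa0
      rw [← h2', key, hwC, ← hco, ← hcent_aa q]
    have htr : lam + star lam = γ + star γ := by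
      have h5 := congrArg (fun p => p.coeff 1) hqq
      simp only [hqdef] at h5
      rw [coeff_quad_one, coeff_quad_one] at h5
      exact neg_injective h5
    have hnm : star lam * lam = star γ * γ := by
      have h5 := congrArg (fun p => p.coeff 0) hqq
      simp only [hqdef] at h5
      rw [coeff_quad_zero, coeff_quad_zero] at h5
      exact h5
    refine ⟨h * (X - C (star lam)) + C a, lam, ?_, htr, hnm⟩
    have hq2 : q = (X - C (star lam)) * (X - C lam) := by
      rw [← hqq, expand_quad]
    rw [hfe, hqcent h, hq2, hrF]
    noncomm_ring

lemma linF_succ (c : ℍ) (n : ℕ) (lam : ℕ → ℍ) :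
    linearFactorization c (n + 1) lam =
      linearFactorization c n (fun k => lam (k + 1)) * (X - C (lam 1)) := by
  unfold linearFactorization
  rw [List.range_succ_eq_map, List.reverse_cons, List.map_append, List.prod_append,
    List.map_reverse, List.map_map, ← List.map_reverse]
  simp only [List.map_cons, List.map_nil, List.prod_cons, List.prod_nil, mul_one,
    Function.comp_def]
  rw [← mul_assoc]

lemma quadF_succ (c : ℍ) (n : ℕ) (γ : ℕ → ℍ) :
    quadraticFactorization c (n + 1) γ =
      quadraticFactorization c n (fun k => γ (k + 1)) *
        (X ^ 2 - C (γ 1 + star (γ 1)) * X + C (star (γ 1) * γ 1)) := by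
  unfold quadraticFactorization
  rw [List.range_succ_eq_map, List.map_cons, List.prod_cons, List.map_map]
  have hcent := central_of_polyConj_eq (polyConj_quad (γ 1))
  rw [hcent, ← mul_assoc]
  simp only [Function.comp_def, Nat.succ_eq_add_one]

lemma linF_congr (c : ℍ) (n : ℕ) {α β : ℕ → ℍ} (h : ∀ k, 1 ≤ k → k ≤ n → α k = β k) :
    linearFactorization c n α = linearFactorization c n β := by
  unfold linearFactorization
  congr 1
  apply congrArg
  apply List.map_congr_left
  intro k hk
  rw [List.mem_reverse, List.mem_range] at hk
  rw [h (k + 1) (by omega) (by omega)]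

lemma forward : ∀ (n : ℕ) (c : ℍ) (lam : ℕ → ℍ),
    polyConj (linearFactorization c n lam) * linearFactorization c n lam
      = quadraticFactorization c n lam := by
  intro n
  induction n with
  | zero =>
    intro c lam
    unfold linearFactorization quadraticFactorization
    simp only [List.range_zero, List.reverse_nil, List.map_nil, List.prod_nil, mul_one]
    rw [polyConj_C, ← C_mul]
  | succ n ih =>
    intro c lam
    rw [linF_succ, quadF_succ, polyConj_mul, polyConj_sub, polyConj_X, polyConj_C]
    set L := linearFactorization c n fun k => lam (k + 1) with hL
    have hS : polyConj (polyConj L * L) = polyConj L * L := by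
      rw [polyConj_mul, polyConj_polyConj]
    have cent := central_of_polyConj_eq hS
    calc (X - C (star (lam 1))) * polyConj L * (L * (X - C (lam 1)))
        = (X - C (star (lam 1))) * (polyConj L * L) * (X - C (lam 1)) := by noncomm_ring
      _ = (polyConj L * L) * ((X - C (star (lam 1))) * (X - C (lam 1))) := by
            rw [← cent, mul_assoc]
      _ = _ := by rw [ih, expand_quad]

lemma hard : ∀ (n : ℕ) (f : ℍ[X]), f ≠ 0 → f.natDegree = n →
    ∀ γ : ℕ → ℍ, polyConj f * f = quadraticFactorization f.leadingCoeff n γ →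
    ∃ lam : ℕ → ℍ, f = linearFactorization f.leadingCoeff n lam ∧
      ∀ k ∈ Finset.Icc 1 n,
        lam k + star (lam k) = γ k + star (γ k) ∧
        star (lam k) * lam k = star (γ k) * γ k := by
  intro n
  induction n with
  | zero =>
    intro f hf hn γ _
    refine ⟨fun _ => 0, ?_, by simp⟩
    unfold linearFactorization
    simp only [List.range_zero, List.reverse_nil, List.map_nil, List.prod_nil, mul_one]
    conv_lhs => rw [eq_C_of_natDegree_eq_zero hn]
    rw [Polynomial.leadingCoeff, hn]
  | succ n ih =>
    intro f hf hn γ hQ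
    rw [quadF_succ] at hQ
    obtain ⟨g, lam1, hfg, htr, hnm⟩ := peel f hf (γ 1) _ hQ
    have hmonic : (X - C lam1).Monic := monic_X_sub_C lam1
    have hg0 : g ≠ 0 := by
      rintro rfl
      rw [zero_mul] at hfg
      exact hf hfg
    have hlc : g.leadingCoeff * (X - C lam1).leadingCoeff ≠ 0 := by
      rw [hmonic.leadingCoeff, mul_one]
      exact Polynomial.leadingCoeff_ne_zero.mpr hg0
    have hlcf : f.leadingCoeff = g.leadingCoeff := by
      rw [hfg, leadingCoeff_mul' hlc, hmonic.leadingCoeff, mul_one]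
    have hdeg : g.natDegree = n := by
      have h6 := natDegree_mul' hlc
      rw [← hfg, hn, natDegree_X_sub_C] at h6
      omega
    have hsc : polyConj (polyConj g * g) = polyConj g * g := by
      rw [polyConj_mul, polyConj_polyConj]
    have cent := central_of_polyConj_eq hsc
    have hq1 : (X - C (star lam1)) * (X - C lam1) =
        X ^ 2 - C (γ 1 + star (γ 1)) * X + C (star (γ 1) * γ 1) := by
      rw [expand_quad, htr, hnm]
    have hcomp : polyConj f * f = (polyConj g * g) *
        (X ^ 2 - C (γ 1 + star (γ 1)) * X + C (star (γ 1) * γ 1)) := by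
      rw [hfg, polyConj_mul, polyConj_sub, polyConj_X, polyConj_C]
      calc (X - C (star lam1)) * polyConj g * (g * (X - C lam1))
          = (X - C (star lam1)) * (polyConj g * g) * (X - C lam1) := by noncomm_ring
        _ = (polyConj g * g) * ((X - C (star lam1)) * (X - C lam1)) := by
              rw [← cent, mul_assoc]
        _ = _ := by rw [hq1]
    have hGg : polyConj g * g =
        quadraticFactorization g.leadingCoeff n (fun k => γ (k + 1)) := by
      have hqne : (X ^ 2 - C (γ 1 + star (γ 1)) * X + C (star (γ 1) * γ 1) : ℍ[X]) ≠ 0 :=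
        (monic_quad _ _).ne_zero
      rw [← hlcf]
      exact mul_right_cancel₀ hqne (hcomp.symm.trans hQ)
    obtain ⟨μ, hgμ, hcond⟩ := ih g hg0 hdeg _ hGg
    set lam' : ℕ → ℍ := fun k => if k = 1 then lam1 else μ (k - 1) with hlam'
    have hlast : lam' 1 = lam1 := by simp [hlam']
    refine ⟨lam', ?_, ?_⟩
    · have heads : linearFactorization f.leadingCoeff n (fun k => lam' (k + 1)) = g := by
        rw [hlcf]
        refine (linF_congr _ _ fun k h1 _ => ?_).trans hgμ.symm
        have hk2 : k + 1 ≠ 1 := by omega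
        simp only [hlam', if_neg hk2, Nat.add_sub_cancel]
      rw [linF_succ, heads, hlast]
      exact hfg
    · intro k hk
      rw [Finset.mem_Icc] at hk
      by_cases h1 : k = 1
      · subst h1
        rw [hlast]
        exact ⟨htr, hnm⟩
      · have hlk : lam' k = μ (k - 1) := by simp [hlam', h1]
        rw [hlk]
        have h7 := hcond (k - 1) (Finset.mem_Icc.mpr ⟨by omega, by omega⟩)
        rwa [show k - 1 + 1 = k by omega] at h7

end QFactAux

theorem factorization_iff_companion_factors
    (f : (Quaternion ℝ)[X]) (hf : f ≠ 0) (n : ℕ) (hn : f.natDegree = n) :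
    ((∃ lam : ℕ → Quaternion ℝ,
        f = linearFactorization f.leadingCoeff n lam) ↔
      (∃ γ : ℕ → Quaternion ℝ,
        polyConj f * f = quadraticFactorization f.leadingCoeff n γ)) ∧
    (∀ γ : ℕ → Quaternion ℝ,
      polyConj f * f = quadraticFactorization f.leadingCoeff n γ →
      ∃ lam : ℕ → Quaternion ℝ,
        f = linearFactorization f.leadingCoeff n lam ∧
        ∀ k ∈ Finset.Icc 1 n,
          lam k + star (lam k) = γ k + star (γ k) ∧
          star (lam k) * lam k = star (γ k) * γ k) := by
  constructor
  · constructor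
    · rintro ⟨lam, hlam⟩
      refine ⟨lam, ?_⟩
      conv_lhs => rw [hlam]
      exact QFactAux.forward n f.leadingCoeff lam
    · rintro ⟨γ, hγ⟩
      obtain ⟨lam, h, _⟩ := QFactAux.hard n f hf hn γ hγ
      exact ⟨lam, h⟩
  · exact fun γ hγ => QFactAux.hard n f hf hn γ hγ
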